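/- For the uniform kernel K(u) = (1/2)·1{u² < 1}, the asymptotic variance constant V_{1,K} = e_1' A_{1,K}^{-1} B_{1,K} A_{1,K}^{-1} e_1 of the local linear density estimator equals 6/5. -/

import Mathlib

open MeasureTheory Matrix

noncomputable def K₀ : ℝ → ℝ := fun u => if u ^ 2 < 1 then (1:ℝ)/2 else 0

lemma integral_Iio_K (f : ℝ → ℝ) :
    ∫ u in Set.Iio (0:ℝ), f u * K₀ u = ∫ u in (-1:ℝ)..0, f u * (1/2) := by
  have key : ∀ u : ℝ, u ^ 2 < 1 ↔ u ∈ Set.Ioo (-1:ℝ) 1 := by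
    intro u
    rw [Set.mem_Ioo, ← abs_lt, ← sq_lt_one_iff_abs_lt_one]
  have h1 : (fun u : ℝ => f u * K₀ u)
      = Set.indicator (Set.Ioo (-1:ℝ) 1) (fun u => f u * (1/2)) := by
    funext u
    simp only [K₀, Set.indicator_apply]
    split_ifs with h h' h'
    · rfl
    · exact absurd ((key u).mp h) h'
    · exact absurd ((key u).mpr h') h
    · ring
  rw [h1, MeasureTheory.setIntegral_indicator measurableSet_Ioo]
  have h2 : Set.Iio (0:ℝ) ∩ Set.Ioo (-1) 1 = Set.Ioo (-1) 0 := by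
    ext x
    simp only [Set.mem_inter_iff, Set.mem_Iio, Set.mem_Ioo]
    constructor
    · rintro ⟨h0, ha, _⟩; exact ⟨ha, h0⟩
    · rintro ⟨ha, h0⟩; exact ⟨h0, ha, by linarith⟩
  rw [h2, ← MeasureTheory.integral_Ioc_eq_integral_Ioo,
    ← intervalIntegral.integral_of_le (by norm_num : (-1:ℝ) ≤ 0)]

lemma inner_min (j : ℕ) (u : ℝ) (h1 : (-1:ℝ) ≤ u) (h2 : u ≤ 0) :
    ∫ v in (-1:ℝ)..0, min u v * v ^ j * (1/2)
      = ((u ^ (j+2) - (-1:ℝ) ^ (j+2)) / (j+2)) * (1/2)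
        + ((0:ℝ) ^ (j+1) - u ^ (j+1)) / (j+1) * (u/2) := by
  have hc : ∀ a b : ℝ, IntervalIntegrable (fun v => min u v * v ^ j * (1/2)) volume a b :=
    fun a b => Continuous.intervalIntegrable (by fun_prop) a b
  rw [← intervalIntegral.integral_add_adjacent_intervals (hc (-1) u) (hc u 0)]
  have e1 : ∫ v in (-1:ℝ)..u, min u v * v ^ j * (1/2) = ∫ v in (-1:ℝ)..u, v ^ (j+1) * (1/2) := by
    apply intervalIntegral.integral_congr
    intro v hv
    rw [Set.uIcc_of_le h1] at hv
    dsimp only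
    rw [min_eq_right hv.2]; ring
  have e2 : ∫ v in u..(0:ℝ), min u v * v ^ j * (1/2) = ∫ v in u..(0:ℝ), v ^ j * (u/2) := by
    apply intervalIntegral.integral_congr
    intro v hv
    rw [Set.uIcc_of_le h2] at hv
    dsimp only
    rw [min_eq_left hv.1]; ring
  rw [e1, e2, intervalIntegral.integral_mul_const, intervalIntegral.integral_mul_const,
    integral_pow, integral_pow]
  push_cast
  ring

lemma B_outer (i j : ℕ) :
    (∫ u in Set.Iio (0:ℝ), ∫ v in Set.Iio (0:ℝ), min u v * u ^ i * v ^ j * K₀ u * K₀ v)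
      = ∫ u in (-1:ℝ)..0,
          (((u ^ (j+2) - (-1:ℝ) ^ (j+2)) / (j+2)) * (1/2)
            + ((0:ℝ) ^ (j+1) - u ^ (j+1)) / (j+1) * (u/2)) * u ^ i * (1/2) := by
  have inner : ∀ u : ℝ,
      (∫ v in Set.Iio (0:ℝ), min u v * u ^ i * v ^ j * K₀ u * K₀ v)
        = ((∫ v in (-1:ℝ)..0, min u v * v ^ j * (1/2)) * u ^ i) * K₀ u := by
    intro u
    rw [integral_Iio_K (fun v => min u v * u ^ i * v ^ j * K₀ u)]
    rw [← intervalIntegral.integral_mul_const, ← intervalIntegral.integral_mul_const]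
    apply intervalIntegral.integral_congr
    intro v _
    dsimp only
    ring
  simp only [inner]
  rw [integral_Iio_K (fun u => (∫ v in (-1:ℝ)..0, min u v * v ^ j * (1/2)) * u ^ i)]
  apply intervalIntegral.integral_congr
  intro u hu
  rw [Set.uIcc_of_le (by norm_num : (-1:ℝ) ≤ 0)] at hu
  dsimp only
  rw [inner_min j u hu.1 hu.2]

lemma poly_int (a b c d e : ℝ) :
    ∫ u in (-1:ℝ)..0, (a*u^4 + b*u^3 + c*u^2 + d*u + e) = a/5 - b/4 + c/3 - d/2 + e := by
  have hd : ∀ u : ℝ, HasDerivAt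
      (fun x : ℝ => a*x^5/5 + b*x^4/4 + c*x^3/3 + d*x^2/2 + e*x)
      (a*u^4 + b*u^3 + c*u^2 + d*u + e) u := by
    intro u
    have h5 : HasDerivAt (fun x : ℝ => x^5) (5*u^4) u := by simpa using hasDerivAt_pow 5 u
    have h4 : HasDerivAt (fun x : ℝ => x^4) (4*u^3) u := by simpa using hasDerivAt_pow 4 u
    have h3 : HasDerivAt (fun x : ℝ => x^3) (3*u^2) u := by simpa using hasDerivAt_pow 3 u
    have h2 : HasDerivAt (fun x : ℝ => x^2) (2*u) u := by simpa using hasDerivAt_pow 2 u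
    have h1 : HasDerivAt (fun x : ℝ => x) 1 u := hasDerivAt_id u
    have := ((((h5.const_mul (a/5)).add (h4.const_mul (b/4))).add
      (h3.const_mul (c/3))).add (h2.const_mul (d/2))).add (h1.const_mul e)
    have hf : (fun x : ℝ => a*x^5/5 + b*x^4/4 + c*x^3/3 + d*x^2/2 + e*x)
        = ((((fun y : ℝ => a/5*y^5) + fun y => b/4*y^4) + fun y => c/3*y^3)
          + fun y => d/2*y^2) + fun y => e*y := by
      funext x; simp only [Pi.add_apply]; ring
    have hg : a*u^4 + b*u^3 + c*u^2 + d*u + e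
        = a/5*(5*u^4) + b/4*(4*u^3) + c/3*(3*u^2) + d/2*(2*u) + e*1 := by ring
    rw [hf, hg]
    exact this
  rw [intervalIntegral.integral_eq_sub_of_hasDerivAt (fun u _ => hd u)
    (Continuous.intervalIntegrable (by fun_prop) _ _)]
  norm_num
  ring

lemma A_val (n : ℕ) :
    (∫ u in Set.Iio (0:ℝ), u ^ n * K₀ u)
      = ((0:ℝ)^(n+1) - (-1:ℝ)^(n+1))/(n+1) * (1/2) := by
  rw [integral_Iio_K (fun u => u ^ n), intervalIntegral.integral_mul_const, integral_pow]

lemma B_val (i j : ℕ) (a b c d e r : ℝ)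
    (hpoly : ∀ u : ℝ, (((u ^ (j+2) - (-1:ℝ) ^ (j+2)) / (j+2)) * (1/2)
            + ((0:ℝ) ^ (j+1) - u ^ (j+1)) / (j+1) * (u/2)) * u ^ i * (1/2)
          = a*u^4 + b*u^3 + c*u^2 + d*u + e)
    (hr : a/5 - b/4 + c/3 - d/2 + e = r) :
    (∫ u in Set.Iio (0:ℝ), ∫ v in Set.Iio (0:ℝ), min u v * u ^ i * v ^ j * K₀ u * K₀ v) = r := by
  rw [B_outer i j]
  rw [intervalIntegral.integral_congr (g := fun u => a*u^4 + b*u^3 + c*u^2 + d*u + e)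
    (fun u _ => hpoly u), poly_int, hr]

lemma B00 : (∫ u in Set.Iio (0:ℝ), ∫ v in Set.Iio (0:ℝ),
    min u v * u ^ (0:ℕ) * v ^ (0:ℕ) * K₀ u * K₀ v) = -(1/6) :=
  B_val 0 0 0 0 (-(1/8)) 0 (-(1/8)) _ (fun u => by norm_num; ring) (by norm_num)

lemma B01 : (∫ u in Set.Iio (0:ℝ), ∫ v in Set.Iio (0:ℝ),
    min u v * u ^ (0:ℕ) * v ^ (1:ℕ) * K₀ u * K₀ v) = 3/32 :=
  B_val 0 1 0 (-(1/24)) 0 0 (1/12) _ (fun u => by norm_num; ring) (by norm_num)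

lemma B10 : (∫ u in Set.Iio (0:ℝ), ∫ v in Set.Iio (0:ℝ),
    min u v * u ^ (1:ℕ) * v ^ (0:ℕ) * K₀ u * K₀ v) = 3/32 :=
  B_val 1 0 0 (-(1/8)) 0 (-(1/8)) 0 _ (fun u => by norm_num; ring) (by norm_num)

lemma B11 : (∫ u in Set.Iio (0:ℝ), ∫ v in Set.Iio (0:ℝ),
    min u v * u ^ (1:ℕ) * v ^ (1:ℕ) * K₀ u * K₀ v) = -(1/20) :=
  B_val 1 1 (-(1/24)) 0 0 (1/12) 0 _ (fun u => by norm_num; ring) (by norm_num)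

/-- For the uniform kernel `K u = (1/2)·1{u² < 1}`, the asymptotic variance
constant `V_{1,K} = e₁' A_{1,K}⁻¹ B_{1,K} A_{1,K}⁻¹ e₁` of the local linear density estimator
equals `6/5`. -/
theorem uniform_variance_constant :
    let K : ℝ → ℝ := fun u => if u ^ 2 < 1 then (1:ℝ)/2 else 0
    let A : Matrix (Fin 2) (Fin 2) ℝ :=
      Matrix.of fun i j => ∫ u in Set.Iio (0 : ℝ), u ^ ((i : ℕ) + (j : ℕ)) * K u
    let B : Matrix (Fin 2) (Fin 2) ℝ :=
      Matrix.of fun i j => ∫ u in Set.Iio (0 : ℝ), ∫ v in Set.Iio (0 : ℝ),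
        min u v * u ^ (i : ℕ) * v ^ (j : ℕ) * K u * K v
    let e1 : Fin 2 → ℝ := ![0, 1]
    e1 ⬝ᵥ ((A⁻¹ * B * A⁻¹) *ᵥ e1) = 6/5 := by
  intro K A B e1
  have hA : A = !![(1:ℝ)/2, -(1/4); -(1/4), 1/6] := by
    have e00 : A 0 0 = (1:ℝ)/2 := by
      show (∫ u in Set.Iio (0:ℝ), u ^ ((0:ℕ) + 0) * K₀ u) = 1/2
      rw [A_val]; norm_num
    have e01 : A 0 1 = -((1:ℝ)/4) := by
      show (∫ u in Set.Iio (0:ℝ), u ^ ((0:ℕ) + 1) * K₀ u) = -(1/4)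
      rw [A_val]; norm_num
    have e10 : A 1 0 = -((1:ℝ)/4) := by
      show (∫ u in Set.Iio (0:ℝ), u ^ ((1:ℕ) + 0) * K₀ u) = -(1/4)
      rw [A_val]; norm_num
    have e11 : A 1 1 = (1:ℝ)/6 := by
      show (∫ u in Set.Iio (0:ℝ), u ^ ((1:ℕ) + 1) * K₀ u) = 1/6
      rw [A_val]; norm_num
    ext i j
    fin_cases i <;> fin_cases j <;>
      simp [e00, e01, e10, e11]
  have hB : B = !![-(1/6 : ℝ), 3/32; 3/32, -(1/20)] := by
    have e00 : B 0 0 = -((1:ℝ)/6) := by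
      show (∫ u in Set.Iio (0:ℝ), ∫ v in Set.Iio (0:ℝ),
        min u v * u ^ (0:ℕ) * v ^ (0:ℕ) * K₀ u * K₀ v) = -(1/6)
      exact B00
    have e01 : B 0 1 = (3:ℝ)/32 := by
      show (∫ u in Set.Iio (0:ℝ), ∫ v in Set.Iio (0:ℝ),
        min u v * u ^ (0:ℕ) * v ^ (1:ℕ) * K₀ u * K₀ v) = 3/32
      exact B01
    have e10 : B 1 0 = (3:ℝ)/32 := by
      show (∫ u in Set.Iio (0:ℝ), ∫ v in Set.Iio (0:ℝ),
        min u v * u ^ (1:ℕ) * v ^ (0:ℕ) * K₀ u * K₀ v) = 3/32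
      exact B10
    have e11 : B 1 1 = -((1:ℝ)/20) := by
      show (∫ u in Set.Iio (0:ℝ), ∫ v in Set.Iio (0:ℝ),
        min u v * u ^ (1:ℕ) * v ^ (1:ℕ) * K₀ u * K₀ v) = -(1/20)
      exact B11
    ext i j
    fin_cases i <;> fin_cases j <;>
      simp [e00, e01, e10, e11]
  have hAinv : A⁻¹ = !![(8:ℝ), 12; 12, 24] := by
    rw [hA]
    apply Matrix.inv_eq_right_inv
    rw [Matrix.one_fin_two]
    norm_num [Matrix.mul_fin_two]
  rw [hAinv, hB]
  norm_num [Matrix.mul_fin_two, Matrix.mulVec, dotProduct, Fin.sum_univ_two, e1]
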